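/- Let F(x) = (I − aP)x − b with max_i a·λ_i(P+Pᵀ) < 1, and define T : ℝ^{2n} → ℝ^{2n} by T(x, u) = (F(x) − u, x − x_s) for fixed x_s ∈ ℝⁿ. Then T is monotone: ((x,u) − (y,v))ᵀ(T(x,u) − T(y,v)) ≥ 0 for all (x,u), (y,v). -/

import Mathlib

open Matrix RealInnerProductSpace

/-- Matrix-vector multiplication on Euclidean space. -/
noncomputable def mulVecE {n : ℕ} (M : Matrix (Fin n) (Fin n) ℝ) (x : EuclideanSpace ℝ (Fin n)) :
    EuclideanSpace ℝ (Fin n) :=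
  (WithLp.equiv 2 (Fin n → ℝ)).symm (M.mulVec ((WithLp.equiv 2 (Fin n → ℝ)) x))

lemma key_psd {n : ℕ} (a : ℝ) (P : Matrix (Fin n) (Fin n) ℝ)
    (hA : (P + Pᵀ).IsHermitian) (heig : ∀ i, a * hA.eigenvalues i < 1)
    (z : Fin n → ℝ) :
    0 ≤ z ⬝ᵥ (((1 : Matrix (Fin n) (Fin n) ℝ) - a • P) *ᵥ z) := by
  set U : Matrix (Fin n) (Fin n) ℝ := (hA.eigenvectorUnitary : Matrix (Fin n) (Fin n) ℝ)
  have hUU : U * star U = 1 := (Matrix.mem_unitaryGroup_iff).mp hA.eigenvectorUnitary.2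
  have hdec : (P + Pᵀ) = U * diagonal (RCLike.ofReal ∘ hA.eigenvalues) * star U :=
    hA.spectral_theorem
  have hM : ((2 : ℝ) • (1 : Matrix (Fin n) (Fin n) ℝ) - a • (P + Pᵀ))
      = U * diagonal (fun i => 2 - a * hA.eigenvalues i) * star U := by
    have h1 : (1 : Matrix (Fin n) (Fin n) ℝ) = U * 1 * star U := by
      rw [Matrix.mul_one, hUU]
    calc (2 : ℝ) • (1 : Matrix (Fin n) (Fin n) ℝ) - a • (P + Pᵀ)
        = (2 : ℝ) • (U * 1 * star U)
          - a • (U * diagonal (RCLike.ofReal ∘ hA.eigenvalues) * star U) := by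
          rw [← h1, ← hdec]
      _ = U * ((2 : ℝ) • 1 - a • diagonal (RCLike.ofReal ∘ hA.eigenvalues)) * star U := by
          rw [Matrix.mul_sub, Matrix.sub_mul, Matrix.mul_smul, Matrix.smul_mul,
            Matrix.mul_smul, Matrix.smul_mul]
      _ = U * diagonal (fun i => 2 - a * hA.eigenvalues i) * star U := by
          congr 1
          congr 1
          ext i j
          rcases eq_or_ne i j with h | h
          · subst h
            simp [RCLike.ofReal]
          · simp [Matrix.diagonal_apply_ne _ h, Matrix.one_apply_ne h]
  have hpsd : (((2 : ℝ) • (1 : Matrix (Fin n) (Fin n) ℝ) - a • (P + Pᵀ))).PosSemidef := by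
    rw [hM, Matrix.star_eq_conjTranspose]
    exact (Matrix.posSemidef_diagonal_iff.mpr (fun i => by linarith [heig i])).mul_mul_conjTranspose_same U
  have h2 := hpsd.dotProduct_mulVec_nonneg z
  have hstar : star z = z := rfl
  rw [hstar] at h2
  have hexp : z ⬝ᵥ (((2 : ℝ) • (1 : Matrix (Fin n) (Fin n) ℝ) - a • (P + Pᵀ)) *ᵥ z)
      = 2 * (z ⬝ᵥ (((1 : Matrix (Fin n) (Fin n) ℝ) - a • P) *ᵥ z)) := by
    have htr : z ⬝ᵥ (Pᵀ *ᵥ z) = z ⬝ᵥ (P *ᵥ z) := by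
      rw [Matrix.mulVec_transpose, dotProduct_comm, ← Matrix.dotProduct_mulVec]
    simp only [Matrix.sub_mulVec, Matrix.add_mulVec, Matrix.smul_mulVec,
      Matrix.one_mulVec, dotProduct_sub, dotProduct_add,
      dotProduct_smul, smul_eq_mul, htr]
    ring
  rw [hexp] at h2
  linarith

/-- With `F x = (I - aP) x - b` strongly monotone (eigenvalue condition), the extended
map `T (x, u) = (F x - u, x - x_s)` of the dynamic intervention is monotone. -/
theorem stmt_10 {n : ℕ} (a : ℝ) (P : Matrix (Fin n) (Fin n) ℝ)
    (b : EuclideanSpace ℝ (Fin n))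
    (hA : (P + Pᵀ).IsHermitian)
    (heig : ∀ i, a * hA.eigenvalues i < 1)
    (F : EuclideanSpace ℝ (Fin n) → EuclideanSpace ℝ (Fin n))
    (hF : ∀ x, F x = mulVecE ((1 : Matrix (Fin n) (Fin n) ℝ) - a • P) x - b)
    (xs : EuclideanSpace ℝ (Fin n))
    (T : EuclideanSpace ℝ (Fin n) × EuclideanSpace ℝ (Fin n) →
         EuclideanSpace ℝ (Fin n) × EuclideanSpace ℝ (Fin n))
    (hT : ∀ x u, T (x, u) = (F x - u, x - xs)) :
    ∀ x u y v : EuclideanSpace ℝ (Fin n),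
      ⟪x - y, (T (x, u)).1 - (T (y, v)).1⟫ + ⟪u - v, (T (x, u)).2 - (T (y, v)).2⟫ ≥ 0 := by
  intro x u y v
  set M : Matrix (Fin n) (Fin n) ℝ := (1 : Matrix (Fin n) (Fin n) ℝ) - a • P with hMdef
  have h1 : (T (x, u)).1 - (T (y, v)).1 = mulVecE M (x - y) - (u - v) := by
    rw [hT, hT, hF x, hF y]
    simp only [mulVecE, WithLp.equiv_apply, WithLp.equiv_symm_apply, WithLp.ofLp_sub, WithLp.toLp_sub, Matrix.mulVec_sub]
    abel
  have h2 : (T (x, u)).2 - (T (y, v)).2 = x - y := by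
    rw [hT, hT]
    dsimp only
    abel
  rw [h1, h2, inner_sub_right, real_inner_comm (u - v) (x - y)]
  have h3 : ⟪x - y, mulVecE M (x - y)⟫ ≥ 0 := by
    rw [EuclideanSpace.inner_eq_star_dotProduct, dotProduct_comm]
    exact key_psd a P hA heig _
  linarith
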